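/- Assume K > 0 and l := 2(q+δ)/(2+δ) = 2_*(η), so that α_l = n-2-κ(η). Let v be a C² solution of u'' + ((n-1)/r)u' + (η/r²)u + K r^{δ} u|u|^{q-2} = 0 on an interval (0,r₀), positive for all sufficiently small r, such that lim_{r→0} v(r) r^{α_l} = 0 and lim_{r→0} v'(r) r^{α_l+1} = 0, and such that v(r) r^{κ(η)} does NOT converge to a finite limit as r → 0. Then there exist constants 0 < C₁ ≤ C₂ and r₁ ∈ (0, min(r₀,1)) such that C₁ ≤ v(r) r^{n-2-κ(η)} |ln r|^{1/(q-2)} ≤ C₂ for all 0 < r < r₁. -/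

import Mathlib

open Real Filter Topology Set

noncomputable section



lemma monoIcc {F F' : ℝ → ℝ} {a b : ℝ} (hab : a ≤ b)
    (hd : ∀ t ∈ Icc a b, HasDerivAt F (F' t) t)
    (hpos : ∀ t ∈ Icc a b, 0 ≤ F' t) : F a ≤ F b := by
  have hmono : MonotoneOn F (Icc a b) := by
    apply monotoneOn_of_deriv_nonneg (convex_Icc a b)
    · exact fun t ht => (hd t ht).differentiableAt.continuousAt.continuousWithinAt
    · intro t ht
      rw [interior_Icc] at ht
      exact ((hd t (Ioo_subset_Icc_self ht)).differentiableAt).differentiableWithinAt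
    · intro t ht
      rw [interior_Icc] at ht
      rw [(hd t (Ioo_subset_Icc_self ht)).deriv]
      exact hpos t (Ioo_subset_Icc_self ht)
  exact hmono (left_mem_Icc.2 hab) (right_mem_Icc.2 hab) hab

lemma antiIcc {F F' : ℝ → ℝ} {a b : ℝ} (hab : a ≤ b)
    (hd : ∀ t ∈ Icc a b, HasDerivAt F (F' t) t)
    (hneg : ∀ t ∈ Icc a b, F' t ≤ 0) : F b ≤ F a := by
  have := monoIcc (F := fun t => -F t) (F' := fun t => -F' t) hab
    (fun t ht => (hd t ht).neg) (fun t ht => neg_nonneg.2 (hneg t ht))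
  simp only [neg_le_neg_iff] at this
  exact this

/-- Backward invariance: if `G' > 0` whenever `G = 0`, and `G b ≤ 0`, then `G a ≤ 0`. -/
lemma bwdLe {G G' : ℝ → ℝ} {a b : ℝ} (hab : a ≤ b)
    (hd : ∀ t ∈ Icc a b, HasDerivAt G (G' t) t)
    (hz : ∀ t ∈ Icc a b, G t = 0 → 0 < G' t)
    (hb : G b ≤ 0) : G a ≤ 0 := by
  by_contra hGa
  push_neg at hGa
  have hcont : ContinuousOn G (Icc a b) :=
    fun t ht => (hd t ht).differentiableAt.continuousAt.continuousWithinAt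
  set S : Set ℝ := Icc a b ∩ G ⁻¹' (Iic 0) with hS
  have hSne : S.Nonempty := ⟨b, right_mem_Icc.2 hab, by simpa using hb⟩
  have hSbdd : BddBelow S := ⟨a, fun t ht => ht.1.1⟩
  have hSclosed : IsClosed S :=
    hcont.preimage_isClosed_of_isClosed isClosed_Icc isClosed_Iic
  set c := sInf S with hc
  have hcS : c ∈ S := hSclosed.csInf_mem hSne hSbdd
  have hcIcc : c ∈ Icc a b := hcS.1
  have hGc : G c ≤ 0 := hcS.2
  have hac : a < c := by
    rcases lt_or_eq_of_le hcIcc.1 with h | h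
    · exact h
    · exact absurd hGc (by rw [← h]; linarith)
  have hposb : ∀ t, a ≤ t → t < c → 0 < G t := by
    intro t hat htc
    by_contra hGt
    push_neg at hGt
    have : t ∈ S := ⟨⟨hat, htc.le.trans hcIcc.2⟩, hGt⟩
    exact absurd (csInf_le hSbdd this) (not_le.2 htc)
  have hGc0 : G c = 0 := by
    refine le_antisymm hGc ?_
    have htend : Tendsto G (𝓝[<] c) (𝓝 (G c)) :=
      ((hd c hcIcc).differentiableAt.continuousAt.tendsto).mono_left nhdsWithin_le_nhds
    have hev : ∀ᶠ t in 𝓝[<] c, 0 ≤ G t := by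
      filter_upwards [Ico_mem_nhdsLT_of_mem (⟨hac, le_rfl⟩ : c ∈ Ioc a c)] with t ht
      exact (hposb t ht.1 ht.2).le
    exact ge_of_tendsto htend hev
  have hG'c : 0 < G' c := hz c hcIcc hGc0
  have hslope : Tendsto (slope G c) (𝓝[<] c) (𝓝 (G' c)) :=
    (hasDerivAt_iff_tendsto_slope.1 (hd c hcIcc)).mono_left
      (nhdsWithin_mono c fun t ht => ne_of_lt ht)
  have hev2 : ∀ᶠ t in 𝓝[<] c, 0 < slope G c t := hslope.eventually_const_lt hG'c
  have hev3 : ∀ᶠ t in 𝓝[<] c, t ∈ Ico a c :=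
    Ico_mem_nhdsLT_of_mem (⟨hac, le_rfl⟩ : c ∈ Ioc a c)
  obtain ⟨t, ht1, ht2⟩ := (hev2.and hev3).exists
  have hslope_eq : slope G c t = G t / (t - c) := by
    rw [slope_def_field, hGc0]; ring_nf
  rw [hslope_eq] at ht1
  have htc : t - c < 0 := sub_neg.2 ht2.2
  have : G t < 0 := by
    rcases div_pos_iff.1 ht1 with ⟨h1, h2⟩ | ⟨h1, h2⟩
    · linarith
    · linarith
  exact absurd (hposb t ht2.1 ht2.2) (not_lt.2 this.le)

/-- Forward invariance: if `G' < 0` whenever `G = 0`, and `G a ≤ 0`, then `G b ≤ 0`. -/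
lemma fwdLe {G G' : ℝ → ℝ} {a b : ℝ} (hab : a ≤ b)
    (hd : ∀ t ∈ Icc a b, HasDerivAt G (G' t) t)
    (hz : ∀ t ∈ Icc a b, G t = 0 → G' t < 0)
    (ha : G a ≤ 0) : G b ≤ 0 := by
  have key := bwdLe (G := fun t => G (a + b - t)) (G' := fun t => -G' (a + b - t)) hab
    (fun t ht => by
      have h1 : a + b - t ∈ Icc a b := by constructor <;> [linarith [ht.2]; linarith [ht.1]]
      have := (hd _ h1).comp t (((hasDerivAt_id t).const_sub (a + b)))
      simpa [mul_comm, Function.comp_def] using this)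
    (fun t ht hgt => by
      have h1 : a + b - t ∈ Icc a b := by constructor <;> [linarith [ht.2]; linarith [ht.1]]
      have := hz _ h1 (by simpa using hgt)
      simpa using this)
    (by simpa using ha)
  simpa using key


set_option maxHeartbeats 2000000 in
lemma coreODE (s K q T₀ : ℝ) (hs : 0 < s) (hK : 0 < K) (hq : 2 < q)
    (X Z : ℝ → ℝ)
    (hXd : ∀ t < T₀, HasDerivAt X (Z t) t)
    (hZd : ∀ t < T₀, HasDerivAt Z (s * Z t - K * X t * |X t| ^ (q - 2)) t)
    (hX0 : Tendsto X atBot (𝓝 0))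
    (hXpos : ∀ᶠ t in atBot, 0 < X t)
    (hnc : ¬ ∃ c : ℝ, Tendsto (fun t => X t * Real.exp (-(s * t))) atBot (𝓝 c)) :
    ∃ C₁ C₂ : ℝ, 0 < C₁ ∧ C₁ ≤ C₂ ∧ ∃ T : ℝ, T < T₀ ∧ T < 0 ∧
      ∀ t < T, C₁ ≤ X t * (-t) ^ (1 / (q - 2)) ∧ X t * (-t) ^ (1 / (q - 2)) ≤ C₂ := by
  have hq2 : (0:ℝ) < q - 2 := by linarith
  set σ : ℝ := s / 2 with hσdef
  set c2 : ℝ := 2 * K / s with hc2def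
  set c1 : ℝ := K / (2 * s) with hc1def
  have hσpos : 0 < σ := by positivity
  have hc2pos : 0 < c2 := by positivity
  have hc1pos : 0 < c1 := by positivity
  have hc1c2 : c1 ≤ c2 := by
    rw [hc1def, hc2def, div_le_div_iff₀ (by positivity) hs]
    nlinarith
  have hsc2 : s * c2 = 2 * K := by rw [hc2def]; field_simp
  have hsc1 : s * c1 = K / 2 := by rw [hc1def]; field_simp
  have hKc2 : K / c2 = σ := by rw [hc2def, hσdef]; field_simp
  set ρbar : ℝ := K / (c2 ^ 2 * (q - 1)) with hρbardef
  have hρbarpos : 0 < ρbar := by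
    have : (0:ℝ) < q - 1 := by linarith
    positivity
  set u : ℝ → ℝ := fun t => Z t / X t with hudef
  set ρ : ℝ → ℝ := fun t => X t ^ (q - 2) with hρdef
  -- ρ tends to 0
  have hρ0 : Tendsto ρ atBot (𝓝 0) := by
    have hcont : ContinuousAt (fun x : ℝ => x ^ (q - 2)) 0 :=
      Real.continuousAt_rpow_const 0 (q - 2) (Or.inr (by linarith))
    have := hcont.tendsto.comp hX0
    rw [Real.zero_rpow (ne_of_gt hq2)] at this; exact this
  -- threshold t₀
  obtain ⟨t₀, ht₀⟩ : ∃ t₀ : ℝ, ∀ t ≤ t₀, 0 < X t ∧ ρ t < ρbar ∧ t < T₀ := by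
    have h1 := hXpos
    have h2 : ∀ᶠ t in atBot, ρ t < ρbar := hρ0.eventually_lt_const hρbarpos
    have h3 : ∀ᶠ t in atBot, t < T₀ := eventually_lt_atBot T₀
    exact eventually_atBot.1 ((h1.and h2).and h3 |>.mono fun t ⟨⟨a, b⟩, c⟩ => ⟨a, b, c⟩)
  have hXp : ∀ t ≤ t₀, 0 < X t := fun t ht => (ht₀ t ht).1
  have hρsm : ∀ t ≤ t₀, ρ t < ρbar := fun t ht => (ht₀ t ht).2.1
  have hT : ∀ t ≤ t₀, t < T₀ := fun t ht => (ht₀ t ht).2.2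
  have hρpos : ∀ t ≤ t₀, 0 < ρ t := fun t ht => Real.rpow_pos_of_pos (hXp t ht) _
  have hZu : ∀ t ≤ t₀, Z t = u t * X t := by
    intro t ht
    rw [hudef]
    exact (div_mul_cancel₀ _ (ne_of_gt (hXp t ht))).symm
  -- derivative facts
  have hud : ∀ t ≤ t₀, HasDerivAt u (s * u t - (u t) ^ 2 - K * ρ t) t := by
    intro t ht
    have hX := hXp t ht
    have h := (hZd t (hT t ht)).div (hXd t (hT t ht)) (ne_of_gt hX)
    refine h.congr_deriv (Eq.symm ?_)
    rw [hudef, hρdef, abs_of_pos hX]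
    have hXne : X t ≠ 0 := ne_of_gt hX
    field_simp
    ring
  have hρd : ∀ t ≤ t₀, HasDerivAt ρ ((q - 2) * ρ t * u t) t := by
    intro t ht
    have hX := hXp t ht
    have h := (hXd t (hT t ht)).rpow_const (p := q - 2) (Or.inl (ne_of_gt hX))
    convert h using 1
    have : X t ^ (q - 2 - 1) * X t = X t ^ (q - 2) := by
      rw [← Real.rpow_add_one (ne_of_gt hX)]
      ring_nf
    rw [hρdef, hudef]
    simp only
    rw [← this]
    have hXne : X t ≠ 0 := ne_of_gt hX
    field_simp
  have hlogd : ∀ t ≤ t₀, HasDerivAt (fun τ => Real.log (X τ)) (u t) t := by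
    intro t ht
    exact (hXd t (hT t ht)).log (ne_of_gt (hXp t ht))
  -- contradiction helpers
  have notbelow : ∀ ε t₁ : ℝ, 0 < ε → (∀ t ≤ t₁, ε ≤ X t) → False := by
    intro ε t₁ hε hbel
    have h1 : ∀ᶠ t in atBot, X t < ε := hX0.eventually_lt_const hε
    obtain ⟨t, h2, h3⟩ := (h1.and (eventually_le_atBot t₁)).exists
    exact absurd (hbel t h3) (not_le.2 h2)
  have notconv : ∀ (c tA : ℝ) , tA ≤ t₀ →
      Tendsto (fun t => Real.exp (Real.log (X t) - s * t)) atBot (𝓝 c) → False := by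
    intro c tA htA htend
    refine hnc ⟨c, htend.congr' ?_⟩
    filter_upwards [eventually_le_atBot t₀] with t ht
    rw [Real.exp_sub, Real.exp_log (hXp t ht)]
    rw [Real.exp_neg]
    rfl
  by_cases hA : ∃ t₂ ≤ t₀, u t₂ ≤ c2 * ρ t₂
  · obtain ⟨t₂, ht₂, hAt₂⟩ := hA
    have hup : ∀ t ≤ t₂, u t ≤ c2 * ρ t := by
      intro t ht
      have key : (fun τ => u τ - c2 * ρ τ) t ≤ 0 := by
        apply bwdLe (G' := fun τ => (s * u τ - (u τ)^2 - K * ρ τ) - c2 * ((q-2) * ρ τ * u τ)) ht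
        · intro τ hτ
          have hτ0 : τ ≤ t₀ := le_trans hτ.2 ht₂
          exact (hud τ hτ0).sub ((hρd τ hτ0).const_mul c2)
        · intro τ hτ hz
          have hτ0 : τ ≤ t₀ := le_trans hτ.2 ht₂
          have hρp := hρpos τ hτ0
          have hρs := hρsm τ hτ0
          have huz : u τ = c2 * ρ τ := by
            have : u τ - c2 * ρ τ = 0 := hz
            linarith
          have h5 : c2^2 * (q-1) * ρ τ < K := by
            have h6 : ρ τ < K / (c2^2*(q-1)) := hρs
            have h7 : (0:ℝ) < c2^2*(q-1) := by nlinarith [hc2pos]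
            calc c2^2*(q-1)*ρ τ < c2^2*(q-1)*(K/(c2^2*(q-1))) := by
                  exact mul_lt_mul_of_pos_left h6 h7
              _ = K := by field_simp [ne_of_gt (by linarith : (0:ℝ) < q - 1)]
          simp only [huz]
          nlinarith [mul_pos hρp (sub_pos.2 h5), hsc2, hρp]
        · simpa using hAt₂
      simpa using key
    by_cases hA2 : ∃ t₃ ≤ t₂, c1 * ρ t₃ ≤ u t₃
    · obtain ⟨t₃, ht₃, hAt₃⟩ := hA2
      have ht₃0 : t₃ ≤ t₀ := le_trans ht₃ ht₂
      have hlo : ∀ t ≤ t₃, c1 * ρ t ≤ u t := by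
        intro t ht
        have key : (fun τ => c1 * ρ τ - u τ) t ≤ 0 := by
          apply bwdLe (G' := fun τ => c1 * ((q-2) * ρ τ * u τ) - (s * u τ - (u τ)^2 - K * ρ τ)) ht
          · intro τ hτ
            have hτ0 : τ ≤ t₀ := le_trans hτ.2 ht₃0
            exact ((hρd τ hτ0).const_mul c1).sub (hud τ hτ0)
          · intro τ hτ hz
            have hτ0 : τ ≤ t₀ := le_trans hτ.2 ht₃0
            have hρp := hρpos τ hτ0
            have huz : u τ = c1 * ρ τ := by
              have : c1 * ρ τ - u τ = 0 := hz
              linarith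
            simp only [huz]
            nlinarith [mul_pos hρp hρp, hρp, hsc1, mul_pos (mul_pos hc1pos hc1pos) (mul_pos hρp hρp), hq2, hc1pos, hK, mul_pos hK hρp]
          · simpa using hAt₃
        simpa using key
      -- inverse-density estimates
      set g : ℝ → ℝ := fun t => (ρ t)⁻¹ with hgdef
      have hgd : ∀ t ≤ t₃, HasDerivAt g (-((q-2) * ρ t * u t) / (ρ t)^2) t := by
        intro t ht
        exact (hρd t (le_trans ht ht₃0)).inv (ne_of_gt (hρpos t (le_trans ht ht₃0)))
      have hgub : ∀ t ≤ t₃, g t ≤ g t₃ + (q-2)*c2 * (t₃ - t) := by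
        intro t ht
        have key := monoIcc (F := fun τ => g τ + (q-2)*c2*τ)
          (F' := fun τ => -((q-2) * ρ τ * u τ) / (ρ τ)^2 + (q-2)*c2) ht
          (fun τ hτ => by
            have h := (hgd τ hτ.2).add (((hasDerivAt_id τ).const_mul ((q-2)*c2)))
            simpa [Pi.add_def] using h)
          (fun τ hτ => by
            have hτ0 : τ ≤ t₀ := le_trans hτ.2 ht₃0
            have hρp := hρpos τ hτ0
            have he : -((q-2) * ρ τ * u τ) / (ρ τ)^2 + (q-2)*c2
                = (q-2) * (c2 * ρ τ - u τ) / ρ τ := by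
              field_simp
              ring
            show (0:ℝ) ≤ -((q - 2) * ρ τ * u τ) / ρ τ ^ 2 + (q-2)*c2
            rw [he]
            apply div_nonneg _ hρp.le
            have := hup τ (le_trans hτ.2 ht₃)
            nlinarith [hq2])
        linarith
      have hglb : ∀ t ≤ t₃, g t₃ + (q-2)*c1 * (t₃ - t) ≤ g t := by
        intro t ht
        have key := antiIcc (F := fun τ => g τ + (q-2)*c1*τ)
          (F' := fun τ => -((q-2) * ρ τ * u τ) / (ρ τ)^2 + (q-2)*c1) ht
          (fun τ hτ => by
            have h := (hgd τ hτ.2).add (((hasDerivAt_id τ).const_mul ((q-2)*c1)))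
            simpa [Pi.add_def] using h)
          (fun τ hτ => by
            have hτ0 : τ ≤ t₀ := le_trans hτ.2 ht₃0
            have hρp := hρpos τ hτ0
            have he : -((q-2) * ρ τ * u τ) / (ρ τ)^2 + (q-2)*c1
                = (q-2) * (c1 * ρ τ - u τ) / ρ τ := by
              field_simp
              ring
            show -((q - 2) * ρ τ * u τ) / ρ τ ^ 2 + (q-2)*c1 ≤ 0
            rw [he]
            apply div_nonpos_of_nonpos_of_nonneg _ hρp.le
            have := hlo τ hτ.2
            nlinarith [hq2])
        linarith
      have hg₃pos : 0 < g t₃ := inv_pos.2 (hρpos t₃ ht₃0)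
      set M₁ : ℝ := (q-2)*c1/2 with hM₁def
      set M₂ : ℝ := g t₃ + (q-2)*c2*|t₃| + (q-2)*c2 with hM₂def
      have hb₁pos : (0:ℝ) < (q-2)*c1 := by positivity
      have hb₂pos : (0:ℝ) < (q-2)*c2 := by positivity
      have hM₁pos : 0 < M₁ := by rw [hM₁def]; positivity
      have hM₂pos : 0 < M₂ := by
        rw [hM₂def]
        have := abs_nonneg t₃
        nlinarith [hg₃pos, hb₂pos, mul_nonneg hb₂pos.le (abs_nonneg t₃)]
      set T : ℝ := min (min t₃ (-1)) (-(2*|t₃|+1)) with hTdef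
      have hTt₃ : T ≤ t₃ := le_trans (min_le_left _ _) (min_le_left _ _)
      have hTm1 : T ≤ -1 := le_trans (min_le_left _ _) (min_le_right _ _)
      have hbound : ∀ t < T, M₁*(-t) ≤ g t ∧ g t ≤ M₂*(-t) := by
        intro t htT
        have ht₃' : t ≤ t₃ := le_of_lt (lt_of_lt_of_le htT hTt₃)
        have h1 : t < -1 := lt_of_lt_of_le htT hTm1
        have h2 : t < -(2*|t₃|+1) := lt_of_lt_of_le htT (min_le_right _ _)
        have habs1 : -|t₃| ≤ t₃ := neg_abs_le t₃
        have habs2 : t₃ ≤ |t₃| := le_abs_self t₃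
        have habs0 : (0:ℝ) ≤ |t₃| := abs_nonneg t₃
        constructor
        · have hlow := hglb t ht₃'
          have h3 : (-t)/2 ≤ t₃ - t := by linarith
          have h4 := mul_le_mul_of_nonneg_left h3 hb₁pos.le
          rw [hM₁def]
          nlinarith [hg₃pos]
        · have hub := hgub t ht₃'
          have h3 : t₃ - t ≤ |t₃| + (-t) := by linarith
          rw [hM₂def]
          nlinarith [hg₃pos, hb₂pos, mul_nonneg (mul_nonneg hb₂pos.le habs0) (by linarith : (0:ℝ) ≤ -t - 1), mul_nonneg hg₃pos.le (by linarith : (0:ℝ) ≤ -t - 1)]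
      have hM₁M₂ : M₁ ≤ M₂ := by
        rw [hM₁def, hM₂def]
        nlinarith [hg₃pos, mul_nonneg hb₂pos.le (abs_nonneg t₃), hb₁pos, hb₂pos, mul_le_mul_of_nonneg_left hc1c2 (le_of_lt hq2)]
      have hqinv : (0:ℝ) ≤ (q-2)⁻¹ := inv_nonneg.2 hq2.le
      refine ⟨(M₂⁻¹) ^ ((q-2)⁻¹), (M₁⁻¹) ^ ((q-2)⁻¹),
        Real.rpow_pos_of_pos (inv_pos.2 hM₂pos) _, ?_, T, ?_, ?_, ?_⟩
      · apply Real.rpow_le_rpow (inv_pos.2 hM₂pos).le _ hqinv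
        exact inv_anti₀ hM₁pos hM₁M₂
      · exact lt_of_le_of_lt (le_trans hTt₃ (le_trans ht₃ ht₂)) (hT t₀ le_rfl)
      · linarith
      · intro t htT
        have ht0 : t ≤ t₀ := le_trans (le_of_lt htT) (le_trans hTt₃ ht₃0)
        have hXpt := hXp t ht0
        have hρp := hρpos t ht0
        obtain ⟨hgl, hgu⟩ := hbound t htT
        have htneg : 0 < -t := by linarith [lt_of_lt_of_le htT hTm1]
        have hgtpos : 0 < g t := inv_pos.2 hρp
        have hρval : ρ t = (g t)⁻¹ := by rw [hgdef]; simp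
        have hρub : ρ t ≤ (M₁*(-t))⁻¹ := by
          rw [hρval]
          exact inv_anti₀ (by positivity) hgl
        have hρlb : (M₂*(-t))⁻¹ ≤ ρ t := by
          rw [hρval]
          exact inv_anti₀ hgtpos hgu
        have hXval : X t = (ρ t) ^ ((q-2)⁻¹) := by
          rw [hρdef]
          simp only
          rw [← Real.rpow_mul hXpt.le, mul_inv_cancel₀ (ne_of_gt hq2), Real.rpow_one]
        have key : X t * (-t) ^ (1/(q-2)) = (ρ t * (-t)) ^ ((q-2)⁻¹) := by
          rw [hXval, one_div, Real.mul_rpow hρp.le htneg.le]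
        have hin1 : M₂⁻¹ ≤ ρ t * (-t) := by
          have h6 := mul_le_mul_of_nonneg_right hρlb htneg.le
          have he : (M₂*(-t))⁻¹*(-t) = M₂⁻¹ := by
            rw [mul_inv, mul_assoc, inv_mul_cancel₀ (ne_of_gt htneg), mul_one]
          linarith [he ▸ h6]
        have hin2 : ρ t * (-t) ≤ M₁⁻¹ := by
          have h6 := mul_le_mul_of_nonneg_right hρub htneg.le
          have he : (M₁*(-t))⁻¹*(-t) = M₁⁻¹ := by
            rw [mul_inv, mul_assoc, inv_mul_cancel₀ (ne_of_gt htneg), mul_one]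
          linarith [he ▸ h6]
        rw [key]
        constructor
        · exact Real.rpow_le_rpow (inv_pos.2 hM₂pos).le hin1 hqinv
        · exact Real.rpow_le_rpow (by positivity) hin2 hqinv
    · -- subcase A1 : u stays below c1 ρ : contradiction
      exfalso
      push_neg at hA2
      have hdec : ∀ τ t, τ ≤ t → t ≤ t₂ → u t ≤ u τ := by
        intro τ t hτt ht
        have key := antiIcc (F := u) (F' := fun τ' => s * u τ' - (u τ')^2 - K * ρ τ') hτt
          (fun τ' hτ' => hud τ' (le_trans (le_trans hτ'.2 ht) ht₂))
          (fun τ' hτ' => by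
            have hτ'2 : τ' ≤ t₂ := le_trans hτ'.2 ht
            have hτ'0 : τ' ≤ t₀ := le_trans hτ'2 ht₂
            have h1 := hA2 τ' hτ'2
            have hρp := hρpos τ' hτ'0
            show s * u τ' - (u τ')^2 - K * ρ τ' ≤ 0
            have h9 : s*c1*ρ τ' = K/2*ρ τ' := by rw [hsc1]
            rcases le_or_gt 0 (u τ') with h2 | h2
            · nlinarith [mul_le_mul_of_nonneg_left h1.le hs.le, h9, mul_pos hK hρp, sq_nonneg (u τ')]
            · nlinarith [mul_pos hK hρp, sq_nonneg (u τ'), mul_pos hs (neg_pos.2 h2)])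
        exact key
      have hux : ∀ t ≤ t₂, u t ≤ 0 := by
        intro t ht
        by_contra hpos'
        push_neg at hpos'
        have hev : ∀ᶠ τ in atBot, c1 * ρ τ < u t := by
          have : Tendsto (fun τ => c1 * ρ τ) atBot (𝓝 0) := by
            simpa using hρ0.const_mul c1
          exact this.eventually_lt_const hpos'
        obtain ⟨τ, h1, h2⟩ := (hev.and (eventually_le_atBot t)).exists
        have h3 := hdec τ t h2 ht
        have h4 := hA2 τ (le_trans h2 ht)
        linarith
      have hXanti : ∀ t ≤ t₂, X t₂ ≤ X t := by
        intro t ht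
        have key := antiIcc (F := X) (F' := Z) ht
          (fun τ hτ => hXd τ (hT τ (le_trans hτ.2 ht₂)))
          (fun τ hτ => by
            have hτ0 : τ ≤ t₀ := le_trans hτ.2 ht₂
            rw [hZu τ hτ0]
            exact mul_nonpos_of_nonpos_of_nonneg (hux τ hτ.2) (hXp τ hτ0).le)
        exact key
      exact notbelow (X t₂) t₂ (hXp t₂ ht₂) hXanti
  · -- case B
    exfalso
    push_neg at hA
    have hupos : ∀ t ≤ t₀, 0 < u t := by
      intro t ht
      have h1 : 0 < c2 * ρ t := mul_pos hc2pos (hρpos t ht)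
      linarith [hA t ht]
    have hKρu : ∀ t ≤ t₀, K * ρ t < σ * u t := by
      intro t ht
      have h1 : K * ρ t = σ * (c2 * ρ t) := by
        rw [← hKc2]
        field_simp
      rw [h1]
      exact mul_lt_mul_of_pos_left (hA t ht) hσpos
    by_cases hB1 : ∃ t₁ ≤ t₀, u t₁ < σ
    · obtain ⟨t₁, ht₁, hu₁⟩ := hB1
      have hu₁pos : 0 < u t₁ := hupos t₁ ht₁
      have htrap : ∀ t ≤ t₁, u t ≤ u t₁ := by
        intro t ht
        have key : (fun τ => u τ - u t₁) t ≤ 0 := by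
          apply bwdLe (G' := fun τ => s * u τ - (u τ)^2 - K * ρ τ) ht
          · intro τ hτ
            exact (hud τ (le_trans hτ.2 ht₁)).sub_const (u t₁)
          · intro τ hτ hz
            have hτ0 : τ ≤ t₀ := le_trans hτ.2 ht₁
            have huz : u τ = u t₁ := by
              have : u τ - u t₁ = 0 := hz
              linarith
            have hthis : K * ρ τ < σ * u t₁ := by rw [← huz]; exact hKρu τ hτ0
            show 0 < s * u τ - (u τ)^2 - K * ρ τ
            rw [huz]
            nlinarith [hthis, mul_pos hu₁pos (sub_pos.2 hu₁), hσdef]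
          · simp
        simpa using key
      set β : ℝ := σ - u t₁ with hβdef
      have hβpos : 0 < β := by rw [hβdef]; linarith
      have hexpu : ∀ t ≤ t₁, u t ≤ u t₁ * Real.exp (β * (t - t₁)) := by
        intro t ht
        have key := monoIcc (F := fun τ => u τ * Real.exp (-(β*τ)))
          (F' := fun τ => (s * u τ - (u τ)^2 - K * ρ τ) * Real.exp (-(β*τ))
            + u τ * (Real.exp (-(β*τ)) * (-β))) ht
          (fun τ hτ => by
            have hτ0 : τ ≤ t₀ := le_trans hτ.2 ht₁
            have h := (hud τ hτ0).mul ((((hasDerivAt_id τ).const_mul β).neg).exp)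
            refine h.congr_deriv (Eq.symm ?_)
            simp only [id_eq, Pi.neg_apply]
            ring)
          (fun τ hτ => by
            have hτ0 : τ ≤ t₀ := le_trans hτ.2 ht₁
            have h1 := hKρu τ hτ0
            have h2 := htrap τ hτ.2
            have h3 := hupos τ hτ0
            have hin : 0 ≤ s * u τ - (u τ)^2 - K * ρ τ - β * u τ := by
              nlinarith [mul_nonneg h3.le (sub_nonneg.2 h2), hσdef, hβdef]
            have := mul_nonneg hin (Real.exp_pos (-(β*τ))).le
            nlinarith [this])
        have epos : (0:ℝ) < Real.exp (β*t) := Real.exp_pos _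
        calc u t = (u t * Real.exp (-(β*t))) * Real.exp (β*t) := by
              rw [mul_assoc, ← Real.exp_add]
              simp
          _ ≤ (u t₁ * Real.exp (-(β*t₁))) * Real.exp (β*t) :=
              mul_le_mul_of_nonneg_right key epos.le
          _ = u t₁ * Real.exp (β*(t - t₁)) := by
              rw [mul_assoc, ← Real.exp_add]
              ring_nf
      have hlb : ∀ t ≤ t₁, Real.log (X t₁) - u t₁/β ≤ Real.log (X t) := by
        intro t ht
        have key := antiIcc (F := fun τ => Real.log (X τ) - (u t₁/β) * Real.exp (β*(τ - t₁)))
          (F' := fun τ => u τ - u t₁ * Real.exp (β*(τ - t₁))) ht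
          (fun τ hτ => by
            have hτ0 : τ ≤ t₀ := le_trans hτ.2 ht₁
            have h2 : HasDerivAt (fun x => (u t₁/β) * Real.exp (β*(x - t₁)))
                ((u t₁/β) * (Real.exp (β*(τ - t₁)) * (β*1))) τ :=
              ((((hasDerivAt_id τ).sub_const t₁).const_mul β).exp).const_mul (u t₁/β)
            have h := (hlogd τ hτ0).sub h2
            refine h.congr_deriv (Eq.symm ?_)
            field_simp)
          (fun τ hτ => by
            linarith [hexpu τ hτ.2])
        have e0 : β*(t₁ - t₁) = 0 := by ring
        rw [e0, Real.exp_zero, mul_one] at key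
        have epos : (0:ℝ) < Real.exp (β*(t - t₁)) := Real.exp_pos _
        have hdivpos : 0 < u t₁/β := div_pos hu₁pos hβpos
        nlinarith [mul_pos hdivpos epos]
      have hXlb : ∀ t ≤ t₁, Real.exp (Real.log (X t₁) - u t₁/β) ≤ X t := by
        intro t ht
        have := Real.exp_le_exp.2 (hlb t ht)
        rwa [Real.exp_log (hXp t (le_trans ht ht₁))] at this
      exact notbelow _ t₁ (Real.exp_pos _) hXlb
    · push_neg at hB1
      obtain ⟨CX, hCXdef⟩ : ∃ v : ℝ, v = X t₀ * Real.exp (-(σ*t₀)) := ⟨_, rfl⟩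
      have hCXpos : 0 < CX := by rw [hCXdef]; exact mul_pos (hXp t₀ le_rfl) (Real.exp_pos _)
      have hXexp : ∀ t ≤ t₀, X t ≤ CX * Real.exp (σ*t) := by
        intro t ht
        have key := monoIcc (F := fun τ => Real.log (X τ) - σ*τ)
          (F' := fun τ => u τ - σ) ht
          (fun τ hτ => by
            have h := (hlogd τ hτ.2).sub ((hasDerivAt_id τ).const_mul σ)
            refine h.congr_deriv (Eq.symm ?_)
            ring)
          (fun τ hτ => sub_nonneg.2 (hB1 τ hτ.2))
        have h5 : Real.log (X t) ≤ Real.log (X t₀) - σ*t₀ + σ*t := by linarith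
        have h6 := Real.exp_le_exp.2 h5
        rw [Real.exp_log (hXp t ht)] at h6
        have h7 : Real.exp (Real.log (X t₀) - σ*t₀ + σ*t) = CX * Real.exp (σ*t) := by
          rw [hCXdef, Real.exp_add, Real.exp_sub, Real.exp_neg, Real.exp_log (hXp t₀ le_rfl)]
          ring
        rwa [h7] at h6
      set γ : ℝ := σ*(q-2) with hγdef
      have hγpos : 0 < γ := by rw [hγdef]; positivity
      obtain ⟨δ2, hδ2def⟩ : ∃ v : ℝ, v = K * CX ^ (q-2) := ⟨_, rfl⟩
      have hδ2pos : 0 < δ2 := by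
        rw [hδ2def]

        exact mul_pos hK (Real.rpow_pos_of_pos hCXpos _)
      have hρexp : ∀ t ≤ t₀, K * ρ t ≤ δ2 * Real.exp (γ*t) := by
        intro t ht
        have h1 : ρ t ≤ (CX * Real.exp (σ*t)) ^ (q-2) := by
          rw [hρdef]
          exact Real.rpow_le_rpow (hXp t ht).le (hXexp t ht) hq2.le
        have h2 : (CX * Real.exp (σ*t)) ^ (q-2) = CX ^ (q-2) * Real.exp (γ*t) := by
          rw [Real.mul_rpow hCXpos.le (Real.exp_pos _).le,
            Real.rpow_def_of_pos (Real.exp_pos _), Real.log_exp]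
          congr 1
          rw [hγdef]
          ring
        rw [h2] at h1
        calc K * ρ t ≤ K * (CX ^ (q-2) * Real.exp (γ*t)) :=
              mul_le_mul_of_nonneg_left h1 hK.le
          _ = δ2 * Real.exp (γ*t) := by rw [hδ2def]; ring
      by_cases hB2 : ∃ t₂ ≤ t₀, 2*s ≤ u t₂
      · obtain ⟨t₂, ht₂, hub₂⟩ := hB2
        have hub : ∀ t ≤ t₂, 2*s ≤ u t := by
          intro t ht
          have key : (fun τ => 2*s - u τ) t ≤ 0 := by
            apply bwdLe (G' := fun τ => -(s * u τ - (u τ)^2 - K * ρ τ)) ht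
            · intro τ hτ
              exact (hud τ (le_trans hτ.2 ht₂)).const_sub (2*s)
            · intro τ hτ hz
              have hτ0 : τ ≤ t₀ := le_trans hτ.2 ht₂
              have huz : u τ = 2*s := by
                have : 2*s - u τ = 0 := hz
                linarith
              show 0 < -(s * u τ - (u τ)^2 - K * ρ τ)
              rw [huz]
              nlinarith [mul_pos hK (hρpos τ hτ0), hs]
            · simpa using hub₂
          simpa using key
        have hdecay : ∀ t ≤ t₂, Real.log (X t) - 2*s*t ≤ Real.log (X t₂) - 2*s*t₂ := by
          intro t ht
          have key := monoIcc (F := fun τ => Real.log (X τ) - 2*s*τ)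
            (F' := fun τ => u τ - 2*s) ht
            (fun τ hτ => by
              have h := (hlogd τ (le_trans hτ.2 ht₂)).sub ((hasDerivAt_id τ).const_mul (2*s))
              refine h.congr_deriv (Eq.symm ?_)
              ring)
            (fun τ hτ => sub_nonneg.2 (hub τ hτ.2))
          simpa using key
        have htends : Tendsto (fun t => Real.log (X t) - s*t) atBot atBot := by
          apply tendsto_atBot_mono' atBot
            (f₁ := fun t => (Real.log (X t₂) - 2*s*t₂) + s*t)
          · filter_upwards [eventually_le_atBot t₂] with t ht
            have := hdecay t ht
            linarith
          · exact tendsto_atBot_add_const_left atBot _ (Tendsto.const_mul_atBot hs tendsto_id)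
        exact notconv 0 t₂ ht₂ (Real.tendsto_exp_atBot.comp htends)
      · push_neg at hB2
        obtain ⟨A, hAdef⟩ : ∃ v : ℝ, v = 2*δ2/σ + 1 := ⟨_, rfl⟩
        have hApos : 0 < A := by rw [hAdef]; positivity
        have hσA2 : δ2 ≤ (σ/2)*A := by
          rw [hAdef]
          have he9 : (σ/2)*(2*δ2/σ + 1) = δ2 + σ/2 := by
            field_simp
          rw [he9]
          linarith
        have hwlow : ∀ τ, τ ≤ t₀ → s - A * Real.exp (γ*τ) ≤ u τ := by
          intro τ hτ0
          by_contra hcon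
          push_neg at hcon
          have hall : ∀ t ≤ τ, u t < s - A * Real.exp (γ*t) := by
            intro t ht
            by_contra h2
            push_neg at h2
            have key : (fun x => (s - A * Real.exp (γ*x)) - u x) τ ≤ 0 := by
              apply fwdLe (a := t)
                (G' := fun x => -(A * (Real.exp (γ*x) * (γ*1))) - (s * u x - (u x)^2 - K * ρ x)) ht
              · intro x hx
                have hx0 : x ≤ t₀ := le_trans hx.2 hτ0
                exact ((((hasDerivAt_id x).const_mul γ).exp).const_mul A).const_sub s |>.sub (hud x hx0)
              · intro x hx hz
                have hx0 : x ≤ t₀ := le_trans hx.2 hτ0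
                have he := Real.exp_pos (γ*x)
                have huval : u x = s - A * Real.exp (γ*x) := by
                  have : (s - A * Real.exp (γ*x)) - u x = 0 := hz
                  linarith
                have hσu := hB1 x hx0
                have h7 : A * Real.exp (γ*x) ≤ s - σ := by
                  rw [huval] at hσu
                  linarith
                have h8 := hρexp x hx0
                have hBpos : 0 < A * Real.exp (γ*x) := mul_pos hApos he
                have h9 : δ2 * Real.exp (γ*x) ≤ (σ/2) * (A * Real.exp (γ*x)) := by
                  nlinarith [mul_le_mul_of_nonneg_right hσA2 he.le]
                have h10 : σ * (A*Real.exp (γ*x)) ≤ (s - A*Real.exp (γ*x)) * (A*Real.exp (γ*x)) := by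
                  apply mul_le_mul_of_nonneg_right _ hBpos.le
                  linarith
                show -(A * (Real.exp (γ*x) * (γ*1))) - (s * u x - (u x)^2 - K * ρ x) < 0
                rw [huval]
                have hE : -(A * (Real.exp (γ*x) * (γ*1)))
                    - (s * (s - A*Real.exp (γ*x)) - (s - A*Real.exp (γ*x))^2 - K * ρ x)
                    = K * ρ x - γ*(A*Real.exp (γ*x))
                      - (s - A*Real.exp (γ*x)) * (A*Real.exp (γ*x)) := by ring
                rw [hE]
                linarith only [h8, h9, h10, mul_pos hγpos hBpos, mul_pos hσpos hBpos]
              · exact sub_nonpos.2 h2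
            have key2 : (s - A * Real.exp (γ*τ)) - u τ ≤ 0 := key
            linarith [hcon, key2]
          have hgrow : ∀ t ≤ τ, (u t - s) * Real.exp ((σ/2)*t) ≤ (u τ - s) * Real.exp ((σ/2)*τ) := by
            intro t ht
            have key := monoIcc (F := fun x => (u x - s) * Real.exp ((σ/2)*x))
              (F' := fun x => (s * u x - (u x)^2 - K * ρ x) * Real.exp ((σ/2)*x)
                + (u x - s) * (Real.exp ((σ/2)*x) * (σ/2))) ht
              (fun x hx => by
                have hx0 : x ≤ t₀ := le_trans hx.2 hτ0
                have h := ((hud x hx0).sub_const s).mul (((hasDerivAt_id x).const_mul (σ/2)).exp)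
                refine h.congr_deriv (Eq.symm ?_)
                simp only [id_eq]
                ring)
              (fun x hx => by
                have hx0 : x ≤ t₀ := le_trans hx.2 hτ0
                have h1 := hall x hx.2
                have h2 := hρexp x hx0
                have h3 := hB1 x hx0
                have he := Real.exp_pos (γ*x)
                have hin : 0 ≤ s * u x - (u x)^2 - K * ρ x + (σ/2) * (u x - s) := by
                  have hm : A * Real.exp (γ*x) ≤ s - u x := by linarith
                  have hp1 : 0 ≤ (u x - σ) * (s - u x) :=
                    mul_nonneg (sub_nonneg.2 h3) (by nlinarith [mul_pos hApos he])
                  have hp2 : σ * (A * Real.exp (γ*x)) ≤ σ * (s - u x) :=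
                    mul_le_mul_of_nonneg_left hm hσpos.le
                  have hp3 : δ2 * Real.exp (γ*x) ≤ (σ/2) * (A * Real.exp (γ*x)) := by
                    nlinarith [mul_le_mul_of_nonneg_right hσA2 he.le]
                  linarith only [hp1, hp2, hp3, h2]
                show 0 ≤ (s * u x - (u x)^2 - K * ρ x) * Real.exp ((σ/2)*x)
                  + (u x - s) * (Real.exp ((σ/2)*x) * (σ/2))
                have hE : (s * u x - (u x)^2 - K * ρ x) * Real.exp ((σ/2)*x)
                    + (u x - s) * (Real.exp ((σ/2)*x) * (σ/2))
                    = (s * u x - (u x)^2 - K * ρ x + (σ/2) * (u x - s)) * Real.exp ((σ/2)*x) := by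
                  ring
                rw [hE]
                exact mul_nonneg hin (Real.exp_pos _).le)
            simpa using key
          have hμpos : 0 < -((u τ - s) * Real.exp ((σ/2)*τ)) := by
            have h1 := hcon
            have he := Real.exp_pos (γ*τ)
            have he2 := Real.exp_pos ((σ/2)*τ)
            nlinarith [mul_pos hApos he]
          have hwlow2 : ∀ t ≤ τ, u t - s ≤ ((u τ - s) * Real.exp ((σ/2)*τ)) * Real.exp (-((σ/2)*t)) := by
            intro t ht
            have h1 := hgrow t ht
            calc u t - s = ((u t - s) * Real.exp ((σ/2)*t)) * Real.exp (-((σ/2)*t)) := by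
                  rw [mul_assoc, ← Real.exp_add]
                  simp
              _ ≤ ((u τ - s) * Real.exp ((σ/2)*τ)) * Real.exp (-((σ/2)*t)) :=
                  mul_le_mul_of_nonneg_right h1 (Real.exp_pos _).le
          have htb : Tendsto (fun t : ℝ => -((u τ - s) * Real.exp ((σ/2)*τ)) * Real.exp (-((σ/2)*t))) atBot atTop := by
            have ha : Tendsto (fun t : ℝ => -((σ/2)*t)) atBot atTop := by
              have h1 : Tendsto (fun t : ℝ => (σ/2)*t) atBot atBot :=
                Tendsto.const_mul_atBot (by positivity) tendsto_id
              exact tendsto_neg_atBot_atTop.comp h1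
            exact Tendsto.const_mul_atTop hμpos (Real.tendsto_exp_atTop.comp ha)
          obtain ⟨t, h1, h2⟩ := ((htb.eventually_gt_atTop s).and
            (eventually_le_atBot (min τ t₀))).exists
          have h3 := hwlow2 t (le_trans h2 (min_le_left _ _))
          have h4 := hB1 t (le_trans h2 (min_le_right _ _))
          have h5 : σ ≤ s := by rw [hσdef]; linarith
          linarith [h1, h3, h4, hσpos]
        have hwup : ∀ τ, τ ≤ t₀ → u τ ≤ s + A * Real.exp (γ*τ) := by
          intro τ hτ0
          by_contra hcon
          push_neg at hcon
          have hall : ∀ t ≤ τ, s + A * Real.exp (γ*t) < u t := by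
            intro t ht
            by_contra h2
            push_neg at h2
            have key : (fun x => u x - (s + A * Real.exp (γ*x))) τ ≤ 0 := by
              apply fwdLe (a := t)
                (G' := fun x => (s * u x - (u x)^2 - K * ρ x) - A * (Real.exp (γ*x) * (γ*1))) ht
              · intro x hx
                have hx0 : x ≤ t₀ := le_trans hx.2 hτ0
                exact (hud x hx0).sub ((((hasDerivAt_id x).const_mul γ).exp).const_mul A |>.const_add s)
              · intro x hx hz
                have hx0 : x ≤ t₀ := le_trans hx.2 hτ0
                have he := Real.exp_pos (γ*x)
                have huval : u x = s + A * Real.exp (γ*x) := by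
                  have : u x - (s + A * Real.exp (γ*x)) = 0 := hz
                  linarith
                have hσu := hB1 x hx0
                have hρp := hρpos x hx0
                have hBpos : 0 < A * Real.exp (γ*x) := mul_pos hApos he
                show (s * u x - (u x)^2 - K * ρ x) - A * (Real.exp (γ*x) * (γ*1)) < 0
                rw [huval]
                have hE : (s * (s + A*Real.exp (γ*x)) - (s + A*Real.exp (γ*x))^2 - K * ρ x)
                    - A * (Real.exp (γ*x) * (γ*1))
                    = -((s + A*Real.exp (γ*x)) * (A*Real.exp (γ*x))) - K*ρ x
                      - γ*(A*Real.exp (γ*x)) := by ring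
                rw [hE]
                have h11 : 0 < (s + A*Real.exp (γ*x)) * (A*Real.exp (γ*x)) :=
                  mul_pos (by linarith) hBpos
                have h12 : 0 < γ*(A*Real.exp (γ*x)) := mul_pos hγpos hBpos
                linarith [mul_pos hK hρp]
              · exact sub_nonpos.2 h2
            have key2 : u τ - (s + A * Real.exp (γ*τ)) ≤ 0 := key
            linarith [hcon, key2]
          have hdecr : ∀ t ≤ τ, (u τ - s) * Real.exp (σ*τ) ≤ (u t - s) * Real.exp (σ*t) := by
            intro t ht
            have key := antiIcc (F := fun x => (u x - s) * Real.exp (σ*x))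
              (F' := fun x => (s * u x - (u x)^2 - K * ρ x) * Real.exp (σ*x)
                + (u x - s) * (Real.exp (σ*x) * σ)) ht
              (fun x hx => by
                have hx0 : x ≤ t₀ := le_trans hx.2 hτ0
                have h := ((hud x hx0).sub_const s).mul (((hasDerivAt_id x).const_mul σ).exp)
                refine h.congr_deriv (Eq.symm ?_)
                simp only [id_eq]
                ring)
              (fun x hx => by
                have hx0 : x ≤ t₀ := le_trans hx.2 hτ0
                have h1 := hall x hx.2
                have h3 := hB1 x hx0
                have he := Real.exp_pos (γ*x)
                have hρp := hρpos x hx0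
                have hin : s * u x - (u x)^2 - K * ρ x + (u x - s) * σ ≤ 0 := by
                  nlinarith [mul_nonneg (sub_nonneg.2 h3) (by nlinarith [mul_pos hApos he] : (0:ℝ) ≤ u x - s),
                    mul_pos hK hρp]
                show (s * u x - (u x)^2 - K * ρ x) * Real.exp (σ*x)
                  + (u x - s) * (Real.exp (σ*x) * σ) ≤ 0
                have hE : (s * u x - (u x)^2 - K * ρ x) * Real.exp (σ*x)
                    + (u x - s) * (Real.exp (σ*x) * σ)
                    = (s * u x - (u x)^2 - K * ρ x + (u x - s) * σ) * Real.exp (σ*x) := by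
                  ring
                rw [hE]
                exact mul_nonpos_of_nonpos_of_nonneg hin (Real.exp_pos _).le)
            simpa using key
          have hμ1pos : 0 < (u τ - s) * Real.exp (σ*τ) := by
            have he := Real.exp_pos (γ*τ)
            have he2 := Real.exp_pos (σ*τ)
            nlinarith [mul_pos hApos he]
          have hwup2 : ∀ t ≤ τ, ((u τ - s) * Real.exp (σ*τ)) * Real.exp (-(σ*t)) ≤ u t - s := by
            intro t ht
            have h1 := hdecr t ht
            calc ((u τ - s) * Real.exp (σ*τ)) * Real.exp (-(σ*t))
                ≤ ((u t - s) * Real.exp (σ*t)) * Real.exp (-(σ*t)) :=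
                  mul_le_mul_of_nonneg_right h1 (Real.exp_pos _).le
              _ = u t - s := by
                  rw [mul_assoc, ← Real.exp_add]
                  simp
          have htb : Tendsto (fun t : ℝ => ((u τ - s) * Real.exp (σ*τ)) * Real.exp (-(σ*t))) atBot atTop := by
            have ha : Tendsto (fun t : ℝ => -(σ*t)) atBot atTop := by
              have h1 : Tendsto (fun t : ℝ => σ*t) atBot atBot :=
                Tendsto.const_mul_atBot hσpos tendsto_id
              exact tendsto_neg_atBot_atTop.comp h1
            exact Tendsto.const_mul_atTop hμ1pos (Real.tendsto_exp_atTop.comp ha)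
          obtain ⟨t, h1, h2⟩ := ((htb.eventually_gt_atTop (2*s)).and
            (eventually_le_atBot (min τ t₀))).exists
          have h3 := hwup2 t (le_trans h2 (min_le_left _ _))
          have h4 := hB2 t (le_trans h2 (min_le_right _ _))
          linarith
        -- convergence of log X - s t
        have hfd : ∀ t ≤ t₀, HasDerivAt (fun τ => Real.log (X τ) - s*τ) (u t - s) t := by
          intro t ht
          have h := (hlogd t ht).sub ((hasDerivAt_id t).const_mul s)
          refine h.congr_deriv (Eq.symm ?_)
          ring
        set H₁ : ℝ → ℝ := fun t => (Real.log (X (min t t₀)) - s*(min t t₀))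
          + (A/γ) * Real.exp (γ * min t t₀) with hH₁def
        have hauxd : ∀ τ ≤ t₀, HasDerivAt
            (fun x => (Real.log (X x) - s*x) + (A/γ) * Real.exp (γ*x))
            ((u τ - s) + A * Real.exp (γ*τ)) τ := by
          intro τ hτ0
          have h := (hfd τ hτ0).add ((((hasDerivAt_id τ).const_mul γ).exp).const_mul (A/γ))
          refine h.congr_deriv (Eq.symm ?_)
          have hγne : γ ≠ 0 := ne_of_gt hγpos
          simp only [id_eq]
          field_simp
        have hauxd2 : ∀ τ ≤ t₀, HasDerivAt
            (fun x => (Real.log (X x) - s*x) - (A/γ) * Real.exp (γ*x))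
            ((u τ - s) - A * Real.exp (γ*τ)) τ := by
          intro τ hτ0
          have h := (hfd τ hτ0).sub ((((hasDerivAt_id τ).const_mul γ).exp).const_mul (A/γ))
          refine h.congr_deriv (Eq.symm ?_)
          have hγne : γ ≠ 0 := ne_of_gt hγpos
          simp only [id_eq]
          field_simp
        have hmono : Monotone H₁ := by
          intro t t' htt'
          have h1 : min t t₀ ≤ min t' t₀ := min_le_min htt' le_rfl
          have key := monoIcc (F := fun x => (Real.log (X x) - s*x) + (A/γ) * Real.exp (γ*x))
            (F' := fun x => (u x - s) + A * Real.exp (γ*x)) h1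
            (fun x hx => hauxd x (le_trans hx.2 (min_le_right _ _)))
            (fun x hx => by
              have hx0 : x ≤ t₀ := le_trans hx.2 (min_le_right _ _)
              have := hwlow x hx0
              linarith)
          exact key
        have hbdd : BddBelow (range H₁) := by
          refine ⟨(Real.log (X t₀) - s*t₀) - (A/γ) * Real.exp (γ*t₀), ?_⟩
          rintro x ⟨t, rfl⟩
          have key := antiIcc (F := fun x => (Real.log (X x) - s*x) - (A/γ) * Real.exp (γ*x))
            (F' := fun x => (u x - s) - A * Real.exp (γ*x)) (min_le_right t t₀)
            (fun x hx => hauxd2 x hx.2)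
            (fun x hx => by
              have := hwup x hx.2
              linarith)
          have key2 : (Real.log (X t₀) - s*t₀) - (A/γ) * Real.exp (γ*t₀) ≤
              (Real.log (X (min t t₀)) - s*(min t t₀)) - (A/γ) * Real.exp (γ * min t t₀) := key
          have hpos9 : 0 < (A/γ) * Real.exp (γ * min t t₀) := by positivity
          have hH : H₁ t = (Real.log (X (min t t₀)) - s*(min t t₀))
              + (A/γ) * Real.exp (γ * min t t₀) := rfl
          rw [hH]
          linarith
        have hlim := tendsto_atBot_ciInf hmono hbdd
        have hminbot : Tendsto (fun t : ℝ => min t t₀) atBot atBot :=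
          tendsto_atBot_mono (fun t => min_le_left t t₀) tendsto_id
        have hexp0 : Tendsto (fun t : ℝ => (A/γ) * Real.exp (γ * min t t₀)) atBot (𝓝 0) := by
          have h1 : Tendsto (fun t : ℝ => γ * min t t₀) atBot atBot :=
            Tendsto.const_mul_atBot hγpos hminbot
          have h2 := Real.tendsto_exp_atBot.comp h1
          have h3 := h2.const_mul (A/γ)
          simpa using h3
        have hftend : Tendsto (fun t => Real.log (X (min t t₀)) - s*(min t t₀)) atBot
            (𝓝 (⨅ i, H₁ i)) := by
          have h4 := hlim.sub hexp0
          rw [sub_zero] at h4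
          apply h4.congr
          intro t
          rw [hH₁def]
          simp only
          ring
        have hfin : Tendsto (fun t => Real.log (X t) - s*t) atBot (𝓝 (⨅ i, H₁ i)) := by
          apply hftend.congr'
          filter_upwards [eventually_le_atBot t₀] with t ht
          rw [min_eq_left ht]
        exact notconv (Real.exp (⨅ i, H₁ i)) t₀ le_rfl
          ((Real.continuous_exp.tendsto _).comp hfin)


/-- κ(η) = ((n-2) - √((n-2)²-4η))/2. -/
def kappa (n : ℕ) (η : ℝ) : ℝ :=
  (((n:ℝ) - 2) - Real.sqrt (((n:ℝ) - 2) ^ 2 - 4 * η)) / 2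

/-- The Serrin-type exponent 2_*(η). -/
def serrinStar (n : ℕ) (η : ℝ) : ℝ :=
  2 * ((n:ℝ) + Real.sqrt (((n:ℝ) - 2) ^ 2 - 4 * η)) /
    ((n:ℝ) - 2 + Real.sqrt (((n:ℝ) - 2) ^ 2 - 4 * η))

set_option maxHeartbeats 2000000 in
theorem stmt18 (n : ℕ) (hn : 2 < n) (η K q δ l α : ℝ)
    (hη : η < ((n:ℝ) - 2) ^ 2 / 4) (hK : 0 < K)
    (hq : 2 < q) (hδ : -2 < δ)
    (hl : l = 2 * (q + δ) / (2 + δ)) (hlcrit : l = serrinStar n η)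
    (hα : α = 2 / (l - 2))
    (r₀ : ℝ) (hr₀ : 0 < r₀) (v : ℝ → ℝ)
    (hv : ContDiffOn ℝ 2 v (Ioo 0 r₀))
    (heq : ∀ r ∈ Ioo (0:ℝ) r₀,
      deriv (deriv v) r + ((n:ℝ) - 1) / r * deriv v r + η / r ^ 2 * v r +
        K * r ^ δ * v r * |v r| ^ (q - 2) = 0)
    (hpos : ∀ᶠ r in 𝓝[>] (0:ℝ), 0 < v r)
    (hlim : Tendsto (fun r => v r * r ^ α) (𝓝[>] (0:ℝ)) (𝓝 0))
    (hlim' : Tendsto (fun r => deriv v r * r ^ (α + 1)) (𝓝[>] (0:ℝ)) (𝓝 0))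
    (hnotMu : ¬ ∃ c : ℝ, Tendsto (fun r => v r * r ^ kappa n η) (𝓝[>] (0:ℝ)) (𝓝 c)) :
    ∃ C₁ C₂ : ℝ, 0 < C₁ ∧ C₁ ≤ C₂ ∧
      ∃ r₁ ∈ Ioo (0:ℝ) (min r₀ 1),
        ∀ r ∈ Ioo (0:ℝ) r₁,
          C₁ ≤ v r * r ^ ((n:ℝ) - 2 - kappa n η) * |Real.log r| ^ (1 / (q - 2)) ∧
          v r * r ^ ((n:ℝ) - 2 - kappa n η) * |Real.log r| ^ (1 / (q - 2)) ≤ C₂ := by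
  have hq2 : (0:ℝ) < q - 2 := by linarith
  have h2δ : (0:ℝ) < 2 + δ := by linarith
  have hn2 : (2:ℝ) < (n:ℝ) := by exact_mod_cast hn
  set s : ℝ := Real.sqrt (((n:ℝ) - 2) ^ 2 - 4 * η) with hsdef
  have hdisc : (0:ℝ) < ((n:ℝ) - 2) ^ 2 - 4 * η := by nlinarith
  have hs : 0 < s := Real.sqrt_pos.2 hdisc
  have hs2 : s ^ 2 = ((n:ℝ) - 2) ^ 2 - 4 * η := Real.sq_sqrt hdisc.le
  have hden : (0:ℝ) < (n:ℝ) - 2 + s := by linarith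
  -- value of α
  have hl2 : l - 2 = 4 / ((n:ℝ) - 2 + s) := by
    rw [hlcrit]
    unfold serrinStar
    rw [← hsdef]
    field_simp
    ring
  have hαval : α = ((n:ℝ) - 2 + s) / 2 := by
    rw [hα, hl2]
    field_simp
    ring
  have hαpos : 0 < α := by rw [hαval]; positivity
  -- value of κ
  have hκval : kappa n η = ((n:ℝ) - 2 - s) / 2 := by
    unfold kappa
    rw [← hsdef]
  have hexp : (n:ℝ) - 2 - kappa n η = α := by
    rw [hκval, hαval]
    ring
  have hκα : kappa n η = α - s := by rw [hκval, hαval]; ring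
  -- α (q-2) = 2 + δ
  have hαq : α * (q - 2) = 2 + δ := by
    have hl2' : l - 2 = 2 * (q - 2) / (2 + δ) := by
      rw [hl]
      field_simp
      ring
    have hl2pos : 0 < l - 2 := by
      rw [hl2']
      positivity
    rw [hα] at *
    rw [hl2'] at hl2pos ⊢
    field_simp
  -- Fowler identities
  have hs_eq : 2 * α + 2 - (n:ℝ) = s := by rw [hαval]; ring
  have hηα : α * (α + 2 - (n:ℝ)) + η = 0 := by
    rw [hαval]
    have : (((n:ℝ) - 2 + s) / 2) * (((n:ℝ) - 2 + s) / 2 + 2 - (n:ℝ)) = (s^2 - ((n:ℝ)-2)^2)/4 := by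
      ring
    rw [this, hs2]
    ring
  -- derivatives of v
  have hvd : ∀ r ∈ Ioo (0:ℝ) r₀, HasDerivAt v (deriv v r) r := by
    intro r hr
    exact ((hv.differentiableOn (by norm_num)).differentiableAt
      (isOpen_Ioo.mem_nhds hr)).hasDerivAt
  have hdv : ContDiffOn ℝ 1 (deriv v) (Ioo 0 r₀) :=
    hv.deriv_of_isOpen isOpen_Ioo (by norm_num)
  have hv'd : ∀ r ∈ Ioo (0:ℝ) r₀, HasDerivAt (deriv v) (deriv (deriv v) r) r := by
    intro r hr
    exact ((hdv.differentiableOn (by norm_num)).differentiableAt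
      (isOpen_Ioo.mem_nhds hr)).hasDerivAt
  -- Fowler variables
  set T₀ : ℝ := Real.log r₀ with hT₀def
  set X : ℝ → ℝ := fun t => v (Real.exp t) * Real.exp (α * t) with hXdef
  set Y : ℝ → ℝ := fun t => deriv v (Real.exp t) * Real.exp ((α + 1) * t) with hYdef
  set Z : ℝ → ℝ := fun t => α * X t + Y t with hZdef
  have hmemIoo : ∀ t < T₀, Real.exp t ∈ Ioo (0:ℝ) r₀ := by
    intro t ht
    refine ⟨Real.exp_pos t, ?_⟩
    rw [← Real.exp_log hr₀]
    exact Real.exp_lt_exp.2 ht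
  have hXd : ∀ t < T₀, HasDerivAt X (Z t) t := by
    intro t ht
    have h1 : HasDerivAt (fun τ => v (Real.exp τ)) (deriv v (Real.exp t) * Real.exp t) t :=
      (hvd _ (hmemIoo t ht)).comp t (Real.hasDerivAt_exp t)
    have h2 : HasDerivAt (fun τ => Real.exp (α * τ)) (Real.exp (α * t) * (α * 1)) t :=
      ((hasDerivAt_id t).const_mul α).exp
    have h := h1.mul h2
    refine h.congr_deriv (Eq.symm ?_)
    have hee : Real.exp ((α + 1) * t) = Real.exp t * Real.exp (α * t) := by
      rw [← Real.exp_add]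
      ring_nf
    rw [hZdef]
    simp only [hXdef, hYdef]
    rw [hee]
    ring
  have hYd : ∀ t < T₀, HasDerivAt Y
      ((α + 2 - (n:ℝ)) * Y t - η * X t - K * X t * |X t| ^ (q - 2)) t := by
    intro t ht
    have hmem := hmemIoo t ht
    have hEpos := Real.exp_pos t
    have h1 : HasDerivAt (fun τ => deriv v (Real.exp τ))
        (deriv (deriv v) (Real.exp t) * Real.exp t) t :=
      (hv'd _ hmem).comp t (Real.hasDerivAt_exp t)
    have h2 : HasDerivAt (fun τ => Real.exp ((α + 1) * τ))
        (Real.exp ((α + 1) * t) * ((α + 1) * 1)) t :=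
      ((hasDerivAt_id t).const_mul (α + 1)).exp
    have h := h1.mul h2
    refine h.congr_deriv (Eq.symm ?_)
    -- the equation at r = exp t
    have hveq : deriv (deriv v) (Real.exp t)
        = -(((n:ℝ) - 1) / Real.exp t * deriv v (Real.exp t))
          - η / (Real.exp t) ^ 2 * v (Real.exp t)
          - K * (Real.exp t) ^ δ * v (Real.exp t) * |v (Real.exp t)| ^ (q - 2) := by
      have := heq (Real.exp t) hmem
      linarith
    have hXt : X t = v (Real.exp t) * Real.exp (α * t) := rfl
    have hYt : Y t = deriv v (Real.exp t) * Real.exp ((α + 1) * t) := rfl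
    have hvX : v (Real.exp t) = X t * Real.exp (-(α * t)) := by
      rw [hXt, mul_assoc, ← Real.exp_add, add_neg_cancel, Real.exp_zero, mul_one]
    have hv'Y : deriv v (Real.exp t) = Y t * Real.exp (-((α + 1) * t)) := by
      rw [hYt, mul_assoc, ← Real.exp_add, add_neg_cancel, Real.exp_zero, mul_one]
    have habs : |v (Real.exp t)| ^ (q - 2)
        = |X t| ^ (q - 2) * Real.exp (-((2 + δ) * t)) := by
      rw [hvX, abs_mul, abs_of_pos (Real.exp_pos _),
        Real.mul_rpow (abs_nonneg _) (Real.exp_pos _).le]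
      congr 1
      rw [Real.rpow_def_of_pos (Real.exp_pos _), Real.log_exp]
      congr 1
      linear_combination (-t) * hαq
    have hrδ : (Real.exp t) ^ δ = Real.exp (δ * t) := by
      rw [Real.rpow_def_of_pos (Real.exp_pos _), Real.log_exp]
      ring_nf
    have eE1 : Real.exp ((α + 1) * t) = Real.exp (α * t) * Real.exp t := by
      rw [← Real.exp_add]; ring_nf
    have eE2 : Real.exp (-(α * t)) = (Real.exp (α * t))⁻¹ := Real.exp_neg _
    have eE3 : Real.exp (-((α + 1) * t)) = (Real.exp (α * t) * Real.exp t)⁻¹ := by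
      rw [← eE1, Real.exp_neg]
    have eE4 : Real.exp (-((2 + δ) * t)) = (Real.exp t * Real.exp t * Real.exp (δ * t))⁻¹ := by
      rw [show -((2 + δ) * t) = -(t + (t + δ * t)) by ring, Real.exp_neg,
        Real.exp_add, Real.exp_add]
      ring_nf
    rw [hveq, hrδ, habs, hvX, hv'Y, eE1, eE2, eE3, eE4]
    have hPne : Real.exp (α * t) ≠ 0 := Real.exp_ne_zero _
    have hEne : Real.exp t ≠ 0 := Real.exp_ne_zero _
    have hDne : Real.exp (δ * t) ≠ 0 := Real.exp_ne_zero _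
    field_simp
    ring
  have hZd : ∀ t < T₀, HasDerivAt Z (s * Z t - K * X t * |X t| ^ (q - 2)) t := by
    intro t ht
    have h := ((hXd t ht).const_mul α).add (hYd t ht)
    refine h.congr_deriv (Eq.symm ?_)
    have hZt : Z t = α * X t + Y t := rfl
    rw [hZt]
    linear_combination (-(α * X t) - Y t) * hs_eq + (X t) * hηα
  -- limits
  have hexptend : Tendsto (fun t : ℝ => Real.exp t) atBot (𝓝[>] (0:ℝ)) :=
    Real.tendsto_exp_atBot_nhdsGT
  have hrpowX : ∀ t : ℝ, v (Real.exp t) * (Real.exp t) ^ α = X t := by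
    intro t
    rw [hXdef]
    simp only
    rw [← Real.exp_mul]
    ring_nf
  have hX0 : Tendsto X atBot (𝓝 0) := by
    have := hlim.comp hexptend
    apply this.congr
    intro t
    exact hrpowX t
  have hXpos : ∀ᶠ t in atBot, 0 < X t := by
    filter_upwards [hexptend.eventually hpos] with t ht
    exact mul_pos ht (Real.exp_pos _)
  have hnc : ¬ ∃ c : ℝ, Tendsto (fun t => X t * Real.exp (-(s * t))) atBot (𝓝 c) := by
    rintro ⟨c, hc⟩
    apply hnotMu
    refine ⟨c, ?_⟩
    have hlog : Tendsto Real.log (𝓝[>] (0:ℝ)) atBot := Real.tendsto_log_nhdsGT_zero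
    have := hc.comp hlog
    apply this.congr'
    filter_upwards [self_mem_nhdsWithin] with r hr
    have hrpos : (0:ℝ) < r := hr
    simp only [Function.comp_apply, hXdef]
    rw [Real.exp_log hrpos]
    have h1 : Real.exp (α * Real.log r) = r ^ α := by
      rw [Real.rpow_def_of_pos hrpos]; ring_nf
    have h2 : Real.exp (-(s * Real.log r)) = r ^ (-s) := by
      rw [Real.rpow_def_of_pos hrpos]; ring_nf
    rw [h1, h2, mul_assoc, ← Real.rpow_add hrpos, hκα]
    ring_nf
  obtain ⟨C₁, C₂, hC₁pos, hC₁₂, T, hTT₀, hT0, hmain⟩ :=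
    coreODE s K q T₀ hs hK hq X Z hXd hZd hX0 hXpos hnc
  refine ⟨C₁, C₂, hC₁pos, hC₁₂, Real.exp T, ⟨Real.exp_pos T, ?_⟩, ?_⟩
  · apply lt_min
    · rw [← Real.exp_log hr₀]
      exact Real.exp_lt_exp.2 hTT₀
    · rw [show (1:ℝ) = Real.exp 0 by simp]
      exact Real.exp_lt_exp.2 hT0
  · intro r hr
    have hrpos : 0 < r := hr.1
    have hlogr : Real.log r < T := by
      have := Real.log_lt_log hrpos hr.2
      rwa [Real.log_exp] at this
    have hlneg : Real.log r < 0 := lt_trans hlogr hT0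
    have hXr : v r * r ^ ((n:ℝ) - 2 - kappa n η) = X (Real.log r) := by
      rw [hexp, ← hrpowX (Real.log r), Real.exp_log hrpos]
    have habs : |Real.log r| = -(Real.log r) := abs_of_neg hlneg
    have := hmain (Real.log r) hlogr
    rw [hXr, habs, one_div]
    rw [one_div] at this
    exact this

end
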